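/- Let n ≥ 1, b ∈ Mat_n, and α ∈ ℂ. Suppose y : ℂ → Mat_n is twice differentiable and satisfies the matrix Painlevé II equation P₂⁰: y''(z) = 2 y(z)³ + z·y(z) + b·y(z) + y(z)·b + α·I for all z. For ζ ∈ ℂ with ζ ≠ 0 define the 2×2 block matrices (with n×n blocks) B(ζ,z) = [[ζ·I, y(z)], [y(z), −ζ·I]] and A(ζ,z) = −4ζ·B(ζ,z) + [[2 y(z)² + z·I + 2b, −2 y'(z) − (α/ζ)·I], [2 y'(z) − (α/ζ)·I, −2 y(z)² − z·I − 2b]]. Then for every ζ ≠ 0 and every z: ∂_z A(ζ,z) = ∂_ζ B(ζ,z) + B(ζ,z) A(ζ,z) − A(ζ,z) B(ζ,z), where ∂_ζ B = [[I, 0], [0, −I]]. -/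

import Mathlib

attribute [local instance] Matrix.normedAddCommGroup Matrix.normedSpace

open Matrix

variable {n : ℕ}

noncomputable def blkCLM₁₁ (n : ℕ) :
    Matrix (Fin n) (Fin n) ℂ →L[ℂ] Matrix (Fin n ⊕ Fin n) (Fin n ⊕ Fin n) ℂ :=
  LinearMap.toContinuousLinearMap
    { toFun := fun A => Matrix.fromBlocks A 0 0 0
      map_add' := fun A A' => by rw [Matrix.fromBlocks_add]; simp
      map_smul' := fun c A => by rw [Matrix.fromBlocks_smul]; simp }

noncomputable def blkCLM₁₂ (n : ℕ) :
    Matrix (Fin n) (Fin n) ℂ →L[ℂ] Matrix (Fin n ⊕ Fin n) (Fin n ⊕ Fin n) ℂ :=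
  LinearMap.toContinuousLinearMap
    { toFun := fun A => Matrix.fromBlocks 0 A 0 0
      map_add' := fun A A' => by rw [Matrix.fromBlocks_add]; simp
      map_smul' := fun c A => by rw [Matrix.fromBlocks_smul]; simp }

noncomputable def blkCLM₂₁ (n : ℕ) :
    Matrix (Fin n) (Fin n) ℂ →L[ℂ] Matrix (Fin n ⊕ Fin n) (Fin n ⊕ Fin n) ℂ :=
  LinearMap.toContinuousLinearMap
    { toFun := fun A => Matrix.fromBlocks 0 0 A 0
      map_add' := fun A A' => by rw [Matrix.fromBlocks_add]; simp
      map_smul' := fun c A => by rw [Matrix.fromBlocks_smul]; simp }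

noncomputable def blkCLM₂₂ (n : ℕ) :
    Matrix (Fin n) (Fin n) ℂ →L[ℂ] Matrix (Fin n ⊕ Fin n) (Fin n ⊕ Fin n) ℂ :=
  LinearMap.toContinuousLinearMap
    { toFun := fun A => Matrix.fromBlocks 0 0 0 A
      map_add' := fun A A' => by rw [Matrix.fromBlocks_add]; simp
      map_smul' := fun c A => by rw [Matrix.fromBlocks_smul]; simp }

lemma hasDerivAt_fromBlocks {f g h k : ℂ → Matrix (Fin n) (Fin n) ℂ}
    {f' g' h' k' : Matrix (Fin n) (Fin n) ℂ} {z : ℂ}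
    (hf : HasDerivAt f f' z) (hg : HasDerivAt g g' z)
    (hh : HasDerivAt h h' z) (hk : HasDerivAt k k' z) :
    HasDerivAt (fun w => Matrix.fromBlocks (f w) (g w) (h w) (k w))
      (Matrix.fromBlocks f' g' h' k') z := by
  have H1 := ((blkCLM₁₁ n).hasFDerivAt.comp_hasDerivAt z hf)
  have H2 := ((blkCLM₁₂ n).hasFDerivAt.comp_hasDerivAt z hg)
  have H3 := ((blkCLM₂₁ n).hasFDerivAt.comp_hasDerivAt z hh)
  have H4 := ((blkCLM₂₂ n).hasFDerivAt.comp_hasDerivAt z hk)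
  have := ((H1.add H2).add H3).add H4
  simp only [blkCLM₁₁, blkCLM₁₂, blkCLM₂₁, blkCLM₂₂, Function.comp_def,
    LinearMap.coe_toContinuousLinearMap', LinearMap.coe_mk, AddHom.coe_mk,
    Matrix.fromBlocks_add, add_zero, zero_add] at this
  convert this using 1
  · rfl
  · rfl
  · rfl
  · funext w; simp only [Pi.add_apply, Matrix.fromBlocks_add, add_zero, zero_add]
  · show _ = fromBlocks f' 0 0 0 + fromBlocks 0 g' 0 0 + fromBlocks 0 0 h' 0 + fromBlocks 0 0 0 k'
    simp only [Matrix.fromBlocks_add, add_zero, zero_add]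

/-- Matrix multiplication as a continuous bilinear map. -/
noncomputable def matMulCLM (n : ℕ) :
    Matrix (Fin n) (Fin n) ℂ →L[ℂ] Matrix (Fin n) (Fin n) ℂ →L[ℂ] Matrix (Fin n) (Fin n) ℂ :=
  LinearMap.toContinuousLinearMap
    { toFun := fun A => LinearMap.toContinuousLinearMap (LinearMap.mulLeft ℂ A)
      map_add' := fun A A' => by
        ext X
        simp [add_mul]
      map_smul' := fun c A => by
        ext X
        simp [smul_mul_assoc] }

@[simp] lemma matMulCLM_apply (A B : Matrix (Fin n) (Fin n) ℂ) :
    matMulCLM n A B = A * B := rfl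

lemma hasDerivAt_matmul {f g : ℂ → Matrix (Fin n) (Fin n) ℂ}
    {f' g' : Matrix (Fin n) (Fin n) ℂ} {z : ℂ}
    (hf : HasDerivAt f f' z) (hg : HasDerivAt g g' z) :
    HasDerivAt (fun w => f w * g w) (f' * g z + f z * g') z := by
  letI : NormedAddCommGroup (Matrix (Fin n) (Fin n) ℂ →L[ℂ] Matrix (Fin n) (Fin n) ℂ) :=
    ContinuousLinearMap.toNormedAddCommGroup
  letI : NormedSpace ℂ (Matrix (Fin n) (Fin n) ℂ →L[ℂ] Matrix (Fin n) (Fin n) ℂ) :=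
    ContinuousLinearMap.toNormedSpace
  have h1 : HasDerivAt (fun w => matMulCLM n (f w)) (matMulCLM n f') z :=
    (matMulCLM n).hasFDerivAt.comp_hasDerivAt z hf
  exact h1.clm_apply hg

/-- The matrix `B(ζ,z) = [[ζI, y(z)], [y(z), −ζI]]`. -/
noncomputable def BlaxP20 (n : ℕ) (y : ℂ → Matrix (Fin n) (Fin n) ℂ) (ζ z : ℂ) :
    Matrix (Fin n ⊕ Fin n) (Fin n ⊕ Fin n) ℂ :=
  Matrix.fromBlocks (ζ • 1) (y z) (y z) (-(ζ • 1))

/-- The matrix `A(ζ,z) = −4ζ B + [[2y²+z+2b, −2y'−a/ζ], [2y'−a/ζ, −2y²−z−2b]]`. -/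
noncomputable def AlaxP20 (n : ℕ) (b : Matrix (Fin n) (Fin n) ℂ) (α : ℂ)
    (y : ℂ → Matrix (Fin n) (Fin n) ℂ) (ζ z : ℂ) :
    Matrix (Fin n ⊕ Fin n) (Fin n ⊕ Fin n) ℂ :=
  (-(4 * ζ)) • BlaxP20 n y ζ z +
    Matrix.fromBlocks
      (2 * (y z)^2 + z • 1 + 2 * b)
      (-(2 * deriv y z) - (α/ζ) • 1)
      (2 * deriv y z - (α/ζ) • 1)
      (-(2 * (y z)^2) - z • 1 - 2 * b)

set_option maxHeartbeats 1600000 in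
/-- isomonodromic Lax pair `A' = B_ζ + [B, A]` for the matrix
Painlevé II equation P₂⁰, with `B_ζ = [[I,0],[0,−I]]`. -/
theorem matrixP20_lax_pair (n : ℕ) (hn : 1 ≤ n)
    (b : Matrix (Fin n) (Fin n) ℂ) (α : ℂ)
    (y : ℂ → Matrix (Fin n) (Fin n) ℂ)
    (hy : Differentiable ℂ y) (hy' : Differentiable ℂ (deriv y))
    (heq : ∀ z : ℂ, deriv (deriv y) z =
      (2 : ℂ) • (y z) ^ 3 + z • y z + b * y z + y z * b
        + α • (1 : Matrix (Fin n) (Fin n) ℂ)) :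
    ∀ ζ z : ℂ, ζ ≠ 0 →
      deriv (fun w => AlaxP20 n b α y ζ w) z =
        Matrix.fromBlocks 1 0 0 (-1)
          + BlaxP20 n y ζ z * AlaxP20 n b α y ζ z
          - AlaxP20 n b α y ζ z * BlaxP20 n y ζ z ∧
      deriv (fun w => BlaxP20 n y w z) ζ = Matrix.fromBlocks 1 0 0 (-1) := by
  intro ζ z hζ
  have hu : HasDerivAt y (deriv y z) z := (hy z).hasDerivAt
  have hv : HasDerivAt (deriv y) (deriv (deriv y) z) z := (hy' z).hasDerivAt
  constructor
  · -- derivative of z ↦ A(ζ,z)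
    have hsq : HasDerivAt (fun w => (y w) ^ 2) (deriv y z * y z + y z * deriv y z) z := by
      simpa [pow_two] using hasDerivAt_matmul hu hu
    have h2sq : HasDerivAt (fun w => 2 * (y w) ^ 2)
        (2 * (deriv y z * y z + y z * deriv y z)) z := by
      simpa using hasDerivAt_matmul (hasDerivAt_const z (2 : Matrix (Fin n) (Fin n) ℂ)) hsq
    have h2v : HasDerivAt (fun w => 2 * deriv y w) (2 * deriv (deriv y) z) z := by
      simpa using hasDerivAt_matmul (hasDerivAt_const z (2 : Matrix (Fin n) (Fin n) ℂ)) hv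
    have hB : HasDerivAt (fun w => BlaxP20 n y ζ w)
        (Matrix.fromBlocks 0 (deriv y z) (deriv y z) 0) z := by
      unfold BlaxP20
      exact hasDerivAt_fromBlocks (hasDerivAt_const z _) hu hu (hasDerivAt_const z _)
    have hA : HasDerivAt (fun w => AlaxP20 n b α y ζ w)
        ((-(4*ζ)) • Matrix.fromBlocks 0 (deriv y z) (deriv y z) 0 +
          Matrix.fromBlocks
            (2 * (deriv y z * y z + y z * deriv y z) + (1:ℂ) • (1 : Matrix (Fin n) (Fin n) ℂ))
            (-(2 * deriv (deriv y) z))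
            (2 * deriv (deriv y) z)
            (-(2 * (deriv y z * y z + y z * deriv y z)) -
              (1:ℂ) • (1 : Matrix (Fin n) (Fin n) ℂ))) z := by
      unfold AlaxP20
      refine (hB.const_smul (-(4*ζ))).add (hasDerivAt_fromBlocks ?_ ?_ ?_ ?_)
      · exact (h2sq.add ((hasDerivAt_id z).smul_const
          (1 : Matrix (Fin n) (Fin n) ℂ))).add_const (2 * b)
      · exact (h2v.neg).sub_const ((α/ζ) • (1 : Matrix (Fin n) (Fin n) ℂ))
      · exact h2v.sub_const _
      · exact (h2sq.neg.sub ((hasDerivAt_id z).smul_const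
          (1 : Matrix (Fin n) (Fin n) ℂ))).sub_const (2 * b)
    erw [hA.deriv, heq z]
    unfold AlaxP20 BlaxP20
    simp only [Matrix.fromBlocks_smul, Matrix.fromBlocks_add, Matrix.fromBlocks_multiply,
      sub_eq_add_neg, Matrix.fromBlocks_neg, Matrix.fromBlocks_inj]
    have h2 : (2 : Matrix (Fin n) (Fin n) ℂ) = (2 : ℂ) • 1 := by
      rw [two_smul]; exact one_add_one_eq_two.symm
    refine ⟨?_, ?_, ?_, ?_⟩ <;>
    · simp only [h2, pow_succ, pow_zero, one_mul, mul_add, add_mul, neg_mul, mul_neg, neg_add,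
        neg_neg, smul_mul_assoc, mul_smul_comm, smul_smul, smul_add, smul_neg,
        Matrix.mul_one, Matrix.one_mul, mul_one, mul_assoc]
      match_scalars <;> field_simp [hζ] <;> ring
  · -- derivative of ζ ↦ B(ζ,z)
    have hB : HasDerivAt (fun w => BlaxP20 n y w z)
        (Matrix.fromBlocks ((1:ℂ) • (1 : Matrix (Fin n) (Fin n) ℂ)) 0 0
          (-((1:ℂ) • (1 : Matrix (Fin n) (Fin n) ℂ)))) ζ := by
      unfold BlaxP20
      exact hasDerivAt_fromBlocks ((hasDerivAt_id ζ).smul_const _) (hasDerivAt_const _ _)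
        (hasDerivAt_const _ _) (((hasDerivAt_id ζ).smul_const _).neg)
    erw [hB.deriv]
    simp
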